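/- Let S ⊆ ℕ be a set of positive integers. Suppose there exist a positive integer d, real numbers α₁, …, α_d, and δ > 0 such that for every s ∈ S there is some 1 ≤ i ≤ d with ‖s·αᵢ‖_{ℝ/ℤ} > δ. Then there exist a positive integer r and a coloring c : ℕ → Fin r such that c(x + s) ≠ c(x) for every x ∈ ℕ and every s ∈ S. In particular, S is not large: this finite coloring admits no monochromatic arithmetic progression of length 2 (hence none of any length ≥ 2) with common difference in S. -/

import Mathlib

/-- If `S` is not a set of Bohr recurrence, then there is a finite coloring of `ℕ` in
which no two elements differing by an element of `S` share a color; in particular `S` is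
not large. -/
theorem not_large_of_not_bohr_recurrent
    (S : Set ℕ) (hSpos : ∀ s ∈ S, 0 < s)
    (d : ℕ) (hd : 0 < d) (α : Fin d → ℝ) (δ : ℝ) (hδ : 0 < δ)
    (hS : ∀ s ∈ S, ∃ i : Fin d, ∀ m : ℤ, δ < |(s : ℝ) * α i - (m : ℝ)|) :
    ∃ (r : ℕ), 0 < r ∧ ∃ c : ℕ → Fin r,
      ∀ x : ℕ, ∀ s ∈ S, c (x + s) ≠ c x := by
  set N : ℕ := ⌈1/δ⌉₊ with hNdef
  have hN0 : 0 < N := Nat.ceil_pos.mpr (by positivity)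
  have hN0R : (0:ℝ) < N := by exact_mod_cast hN0
  have hNδ : 1/(N:ℝ) ≤ δ := by
    rw [div_le_iff₀ hN0R]
    have h1 : 1/δ ≤ (N:ℝ) := Nat.le_ceil _
    calc (1:ℝ) = δ * (1/δ) := by field_simp
    _ ≤ δ * N := by nlinarith
  -- the per-coordinate color
  have hb : ∀ n : ℕ, ∀ i : Fin d, (⌊Int.fract ((n:ℝ) * α i) * N⌋).toNat < N := by
    intro n i
    have h1 : ⌊Int.fract ((n:ℝ) * α i) * N⌋ < (N:ℤ) := by
      apply Int.floor_lt.mpr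
      have := Int.fract_lt_one ((n:ℝ) * α i)
      push_cast
      nlinarith
    omega
  set f : ℕ → (Fin d → Fin N) := fun n i => ⟨(⌊Int.fract ((n:ℝ) * α i) * N⌋).toNat, hb n i⟩
    with hfdef
  have hcard : Fintype.card (Fin d → Fin N) = N ^ d := by simp
  let e : (Fin d → Fin N) ≃ Fin (N ^ d) := Fintype.equivFinOfCardEq hcard
  refine ⟨N ^ d, pow_pos hN0 d, fun n => e (f n), ?_⟩
  intro x s hs hcontra
  obtain ⟨i, hi⟩ := hS s hs
  have hf : f (x + s) = f x := e.injective hcontra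
  have hfi : (⌊Int.fract (((x+s:ℕ):ℝ) * α i) * N⌋).toNat
      = (⌊Int.fract (((x:ℕ):ℝ) * α i) * N⌋).toNat := by
    have := congrFun hf i
    simpa [hfdef] using congrArg Fin.val this
  set a : ℝ := ((x+s:ℕ):ℝ) * α i with ha
  set b : ℝ := ((x:ℕ):ℝ) * α i with hbdef
  have hfloor : ⌊Int.fract a * N⌋ = ⌊Int.fract b * N⌋ := by
    have h1 : (0:ℤ) ≤ ⌊Int.fract a * N⌋ :=
      Int.floor_nonneg.mpr (mul_nonneg (Int.fract_nonneg _) hN0R.le)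
    have h2 : (0:ℤ) ≤ ⌊Int.fract b * N⌋ :=
      Int.floor_nonneg.mpr (mul_nonneg (Int.fract_nonneg _) hN0R.le)
    omega
  -- |fract a - fract b| < 1/N
  have hlt : |Int.fract a - Int.fract b| < 1/(N:ℝ) := by
    have h1 := Int.floor_le (Int.fract a * N)
    have h2 := Int.lt_floor_add_one (Int.fract a * N)
    have h3 := Int.floor_le (Int.fract b * N)
    have h4 := Int.lt_floor_add_one (Int.fract b * N)
    rw [hfloor] at h1 h2
    rw [abs_lt]
    constructor
    · have h5 : Int.fract b - Int.fract a < 1/(N:ℝ) := by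
        rw [lt_div_iff₀ hN0R]; nlinarith
      linarith
    · have h5 : Int.fract a - Int.fract b < 1/(N:ℝ) := by
        rw [lt_div_iff₀ hN0R]; nlinarith
      linarith
  have key : (s:ℝ) * α i - ((⌊a⌋ - ⌊b⌋ : ℤ) : ℝ) = Int.fract a - Int.fract b := by
    have hfa : Int.fract a = a - ⌊a⌋ := Int.self_sub_floor a ▸ rfl
    rw [Int.fract, Int.fract, ha, hbdef]
    push_cast
    ring
  have := hi (⌊a⌋ - ⌊b⌋)
  rw [key] at this
  have : δ < 1/(N:ℝ) := lt_trans this hlt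
  linarith
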